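/- For positive integers n, d: (1 + (d²−1)/(n+1))^(n+1) ≥ (d²/(n+d²)) · (1 + d²/n)^n. -/

import Mathlib

lemma exp_four_thirds_lt_four : Real.exp (4/3) < 4 := by
  have h3 : Real.exp (4/3) ^ 3 = Real.exp 4 := by
    rw [← Real.exp_nat_mul]; norm_num
  have h4 : Real.exp 4 < 64 := by
    have he4 : Real.exp 4 = Real.exp 1 ^ 4 := by rw [← Real.exp_nat_mul]; norm_num
    have he := Real.exp_one_lt_d9
    have : Real.exp 1 ^ 4 < (2.7182818286:ℝ) ^ 4 :=
      pow_lt_pow_left₀ he (Real.exp_pos 1).le (by norm_num)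
    rw [he4]; nlinarith
  have : Real.exp (4/3) ^ 3 < 4 ^ 3 := by rw [h3]; norm_num; linarith
  exact lt_of_pow_lt_pow_left₀ 3 (by norm_num) this

lemma aux4 (n : ℕ) (hn : 1 ≤ n) : ((n:ℝ)+1)^(n+1) ≤ 4 * (n:ℝ)^(n+1) := by
  rcases Nat.lt_or_ge n 3 with h | h3n
  · interval_cases n <;> norm_num
  · have hn3 : (3:ℝ) ≤ (n:ℝ) := by exact_mod_cast h3n
    have hn0 : (0:ℝ) < n := by linarith
    have h1 : ((n:ℝ)+1) = (n:ℝ) * (1 + 1/(n:ℝ)) := by field_simp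
    have h2 : (1 + 1/(n:ℝ)) ≤ Real.exp (1/(n:ℝ)) := by
      have := Real.add_one_le_exp (1/(n:ℝ)); linarith
    have h3 : (1 + 1/(n:ℝ))^(n+1) ≤ Real.exp (1/(n:ℝ)) ^ (n+1) :=
      pow_le_pow_left₀ (by positivity) h2 _
    have h5 : Real.exp (1/(n:ℝ)) ^ (n+1) = Real.exp (((n:ℝ)+1) * (1/(n:ℝ))) := by
      rw [← Real.exp_nat_mul]; congr 1; push_cast; ring
    have h6 : ((n:ℝ)+1) * (1/(n:ℝ)) ≤ 4/3 := by
      rw [mul_one_div, div_le_div_iff₀ hn0 (by norm_num)]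
      linarith
    have hb : (1 + 1/(n:ℝ))^(n+1) ≤ 4 :=
      h3.trans (h5 ▸ (Real.exp_le_exp.mpr h6).trans exp_four_thirds_lt_four.le)
    calc ((n:ℝ)+1)^(n+1) = (n:ℝ)^(n+1) * (1 + 1/(n:ℝ))^(n+1) := by rw [h1, mul_pow]
      _ ≤ (n:ℝ)^(n+1) * 4 := by nlinarith [pow_pos hn0 (n+1)]
      _ = 4 * (n:ℝ)^(n+1) := by ring

/-- For positive integers `n, d`:
`(1 + (d²−1)/(n+1))^(n+1) ≥ (d²/(n+d²)) · (1 + d²/n)^n`. -/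
theorem one_add_div_pow_succ_lower_bound (n d : ℕ) (hn : 1 ≤ n) (hd : 1 ≤ d) :
    ((d : ℝ) ^ 2 / ((n : ℝ) + (d : ℝ) ^ 2)) * (1 + (d : ℝ) ^ 2 / (n : ℝ)) ^ n ≤
      (1 + ((d : ℝ) ^ 2 - 1) / ((n : ℝ) + 1)) ^ (n + 1) := by
  set x : ℝ := (d:ℝ)^2 with hxdef
  set B : ℝ := (n:ℝ) with hBdef
  have hB1 : (1:ℝ) ≤ B := by rw [hBdef]; exact_mod_cast hn
  have hx1 : (1:ℝ) ≤ x := by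
    have : (1:ℝ) ≤ (d:ℝ) := by exact_mod_cast hd
    nlinarith
  have hB0 : (0:ℝ) < B := by linarith
  have hA0 : (0:ℝ) < B + x := by linarith
  have hC0 : (0:ℝ) < B + 1 := by linarith
  have e1 : 1 + (x - 1)/(B + 1) = (B + x)/(B + 1) := by field_simp; ring
  have e2 : 1 + x/B = (B + x)/B := by field_simp
  rw [e1, e2, div_pow, div_pow]
  rw [div_mul_div_comm, div_le_div_iff₀ (by positivity) (by positivity)]
  -- goal: x * (B+x)^n * (B+1)^(n+1) ≤ (B+x)^(n+1) * ((B+x) * B^n)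
  have hC4 : (B + 1)^(n+1) ≤ 4 * B^(n+1) := aux4 n hn
  have hK : x * (B + 1)^(n+1) ≤ B^n * (B + x)^2 := by
    have h4 : x * (B + 1)^(n+1) ≤ x * (4 * B^(n+1)) :=
      mul_le_mul_of_nonneg_left hC4 (by linarith)
    have hBn : (0:ℝ) < B^n := pow_pos hB0 n
    have hsq : 0 ≤ B^n * (B - x)^2 := by positivity
    have hps : B^(n+1) = B^n * B := pow_succ B n
    nlinarith
  calc x * (B + x)^n * (B + 1)^(n+1)
      = (B + x)^n * (x * (B + 1)^(n+1)) := by ring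
    _ ≤ (B + x)^n * (B^n * (B + x)^2) :=
        mul_le_mul_of_nonneg_left hK (by positivity)
    _ = (B + x)^(n+1) * ((B + x) * B^n) := by rw [pow_succ]; ring
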